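/- Dedekind's reciprocity law: for coprime positive integers d and c, s(d,c) + s(c,d) = (1/12)(d/c + 1/(dc) + c/d) - 1/4. -/

import Mathlib

open Classical

open Finset in
/-- The sawtooth function: `((x)) = x - ⌊x⌋ - 1/2` if `x ∉ ℤ`, and `0` if `x ∈ ℤ`. -/
noncomputable def saw (x : ℝ) : ℝ :=
  if ∃ n : ℤ, x = (n : ℝ) then 0 else x - ⌊x⌋ - 1/2

/-- The Dedekind sum `s(d,c) = ∑_{k=1}^{c-1} ((k/c))((kd/c))`. -/
noncomputable def dedekindSum (d c : ℤ) : ℝ :=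
  ∑ k ∈ Finset.Icc (1 : ℤ) (c - 1), saw ((k : ℝ) / (c : ℝ)) * saw (((k * d : ℤ) : ℝ) / (c : ℝ))

namespace DedekindAux
open Finset

lemma Icc_one_eq_Ioc (n : ℤ) : Icc (1 : ℤ) n = Ioc 0 n := by
  ext x; simp [mem_Icc, mem_Ioc]; omega

lemma two_sum_id_nat (m : ℕ) : 2 * ∑ k ∈ Ioc (0:ℤ) (m:ℤ), k = (m:ℤ) * (m + 1) := by
  induction m with
  | zero => simp
  | succ m ih =>
    have hins : Ioc (0:ℤ) ((m:ℤ)+1) = insert ((m:ℤ)+1) (Ioc 0 (m:ℤ)) := by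
      ext x; simp [mem_Ioc, mem_insert]; omega
    push_cast
    rw [hins, Finset.sum_insert (by simp)]
    push_cast at ih
    ring_nf; ring_nf at ih; linarith

lemma six_sum_sq_nat (m : ℕ) :
    6 * ∑ k ∈ Ioc (0:ℤ) (m:ℤ), k^2 = (m:ℤ) * (m + 1) * (2*m + 1) := by
  induction m with
  | zero => simp
  | succ m ih =>
    have hins : Ioc (0:ℤ) ((m:ℤ)+1) = insert ((m:ℤ)+1) (Ioc 0 (m:ℤ)) := by
      ext x; simp [mem_Ioc, mem_insert]; omega
    push_cast
    rw [hins, Finset.sum_insert (by simp)]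
    push_cast at ih
    ring_nf; ring_nf at ih; linarith

lemma two_sum_id (n : ℤ) (hn : 0 ≤ n) : 2 * ∑ k ∈ Ioc (0:ℤ) n, k = n * (n + 1) := by
  obtain ⟨m, rfl⟩ := Int.eq_ofNat_of_zero_le hn
  exact two_sum_id_nat m

lemma six_sum_sq (n : ℤ) (hn : 0 ≤ n) :
    6 * ∑ k ∈ Ioc (0:ℤ) n, k^2 = n * (n + 1) * (2*n + 1) := by
  obtain ⟨m, rfl⟩ := Int.eq_ofNat_of_zero_le hn
  exact six_sum_sq_nat m

lemma emod_unit_cancel {c a b : ℤ} (hc : 0 < c) (hab : c ∣ a * b - 1) {x : ℤ}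
    (hx : 0 ≤ x) (hx2 : x < c) : x * a % c * b % c = x := by
  have h1 : x * a % c * b % c = x * a * b % c :=
    Int.ModEq.mul_right b (Int.emod_emod_of_dvd (x*a) dvd_rfl)
  have h2 : x * a * b % c = x % c := by
    obtain ⟨t, ht⟩ := hab
    have hd : c ∣ x - x * a * b := ⟨-(x*t), by linear_combination -x * ht⟩
    exact Int.modEq_iff_dvd.mpr hd
  rw [h1, h2, Int.emod_eq_of_lt hx hx2]

lemma emod_mem {d c : ℤ} (hc : 0 < c) (hcop : IsCoprime d c) {k : ℤ}
    (hk : k ∈ Icc (1:ℤ) (c-1)) : k * d % c ∈ Icc (1:ℤ) (c-1) := by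
  rw [mem_Icc] at hk ⊢
  have h0 : 0 ≤ k * d % c := Int.emod_nonneg _ (by omega)
  have h1 : k * d % c < c := Int.emod_lt_of_pos _ hc
  have hne : k * d % c ≠ 0 := by
    intro h
    have hdvd : c ∣ k * d := Int.dvd_of_emod_eq_zero h
    have : c ∣ k := (hcop.symm).dvd_of_dvd_mul_right hdvd
    have := Int.le_of_dvd (by omega) this
    omega
  omega

lemma sum_emod_perm {M : Type*} [AddCommMonoid M] (d c : ℤ) (hc : 0 < c)
    (hcop : IsCoprime d c) (h : ℤ → M) :
    ∑ k ∈ Icc (1:ℤ) (c-1), h (k * d % c) = ∑ k ∈ Icc (1:ℤ) (c-1), h k := by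
  obtain ⟨u, v, huv⟩ := hcop
  have hdu : c ∣ d * u - 1 := ⟨-v, by linear_combination huv⟩
  have hud : c ∣ u * d - 1 := ⟨-v, by linear_combination huv⟩
  have hcopu : IsCoprime u c := ⟨d, v, by linear_combination huv⟩
  refine Finset.sum_nbij' (fun k => k * d % c) (fun k => k * u % c) ?_ ?_ ?_ ?_ ?_
  · intro k hk; exact emod_mem hc ⟨u, v, huv⟩ hk
  · intro k hk; exact emod_mem hc hcopu hk
  · intro k hk
    rw [mem_Icc] at hk
    exact emod_unit_cancel hc hdu (by omega) (by omega)
  · intro k hk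
    rw [mem_Icc] at hk
    exact emod_unit_cancel hc hud (by omega) (by omega)
  · intro k hk; rfl

lemma floor_int_div (a b : ℤ) (hb : 0 < b) : ⌊(a : ℝ) / (b : ℝ)⌋ = a / b := by
  have hb' : (0:ℝ) < (b:ℝ) := by exact_mod_cast hb
  have he := Int.mul_ediv_add_emod a b
  have hr0 := Int.emod_nonneg a (by omega : b ≠ 0)
  have hr1 := Int.emod_lt_of_pos a hb
  have h1 : a / b * b ≤ a := by nlinarith [he, hr0]
  have h2 : a < (a / b + 1) * b := by nlinarith [he, hr1]
  rw [Int.floor_eq_iff]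
  constructor
  · rw [le_div_iff₀ hb']; exact_mod_cast h1
  · rw [div_lt_iff₀ hb']; push_cast; exact_mod_cast h2

lemma saw_frac {k c : ℤ} (hc : 0 < c) (hnd : ¬ c ∣ k) :
    saw ((k : ℝ) / (c : ℝ)) = ((k % c : ℤ) : ℝ) / c - 1/2 := by
  have hc' : (0:ℝ) < (c:ℝ) := by exact_mod_cast hc
  have hni : ¬ ∃ n : ℤ, (k : ℝ) / (c : ℝ) = (n : ℝ) := by
    rintro ⟨n, hn⟩
    apply hnd
    rw [div_eq_iff hc'.ne'] at hn
    have : k = n * c := by exact_mod_cast hn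
    exact ⟨n, by rw [this, mul_comm]⟩
  rw [saw, if_neg hni, floor_int_div _ _ hc, Int.emod_def]
  push_cast
  field_simp

end DedekindAux

namespace DedekindAux2
open Finset DedekindAux

lemma two_sum_id' (n : ℤ) (hn : 0 ≤ n) : 2 * ∑ k ∈ Icc (1:ℤ) n, k = n * (n + 1) := by
  rw [Icc_one_eq_Ioc]; exact two_sum_id n hn

lemma six_sum_sq' (n : ℤ) (hn : 0 ≤ n) :
    6 * ∑ k ∈ Icc (1:ℤ) n, k^2 = n * (n + 1) * (2*n + 1) := by
  rw [Icc_one_eq_Ioc]; exact six_sum_sq n hn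

lemma card_Icc' (n : ℤ) (hn : 0 ≤ n) : ((Icc (1:ℤ) n).card : ℤ) = n := by
  rw [Int.card_Icc]; omega

/-- Lattice point double counting:
`2·∑ k(kd/c) + ∑ (mc/d)² + ∑ (mc/d) = c(c-1)(d-1)`. -/
lemma count_lemma (d c : ℤ) (hd : 0 < d) (hc : 0 < c) (hcop : IsCoprime d c) :
    2 * (∑ k ∈ Icc (1:ℤ) (c-1), k * (k*d/c))
      + (∑ m ∈ Icc (1:ℤ) (d-1), (m*c/d)^2) + (∑ m ∈ Icc (1:ℤ) (d-1), (m*c/d))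
      = c * (c-1) * (d-1) := by
  classical
  -- step 1 : rewrite k*(k*d/c) as a count
  have hk1 : ∀ k ∈ Icc (1:ℤ) (c-1),
      k * (k*d/c) = ∑ m ∈ Icc (1:ℤ) (d-1), (if m*c < k*d then k else 0) := by
    intro k hk
    rw [mem_Icc] at hk
    have hq0 : 0 ≤ k*d/c := Int.ediv_nonneg (by nlinarith) hc.le
    have hqd : k*d/c ≤ d - 1 := by
      have : k*d/c < d := (Int.ediv_lt_iff_lt_mul hc).mpr (by nlinarith)
      omega
    have hfil : (Icc (1:ℤ) (d-1)).filter (fun m => m*c < k*d) = Icc 1 (k*d/c) := by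
      ext m
      simp only [mem_filter, mem_Icc]
      constructor
      · rintro ⟨⟨h1, _⟩, h3⟩
        exact ⟨h1, (Int.le_ediv_iff_mul_le hc).mpr (by omega)⟩
      · rintro ⟨h1, h2⟩
        have hmc : m * c ≤ k * d := (Int.le_ediv_iff_mul_le hc).mp h2
        have hne : m * c ≠ k * d := by
          intro he
          have hdvd : c ∣ k * d := ⟨m, by linear_combination -he⟩
          have : c ∣ k := hcop.symm.dvd_of_dvd_mul_right hdvd
          have := Int.le_of_dvd (by omega) this
          omega
        exact ⟨⟨h1, by omega⟩, by omega⟩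
    rw [← Finset.sum_filter, hfil, Finset.sum_const, Int.card_Icc, nsmul_eq_mul]
    rw [show (((k*d/c) + 1 - 1).toNat : ℤ) = k*d/c from by omega]
    ring
  -- step 2 : swap the double sum
  have hA : ∑ k ∈ Icc (1:ℤ) (c-1), k * (k*d/c)
      = ∑ m ∈ Icc (1:ℤ) (d-1), ∑ k ∈ Icc (1:ℤ) (c-1), (if m*c < k*d then k else 0) := by
    rw [Finset.sum_congr rfl hk1, Finset.sum_comm]
  -- step 3 : evaluate the inner sums
  have key : ∀ m ∈ Icc (1:ℤ) (d-1),
      2 * ∑ k ∈ Icc (1:ℤ) (c-1), (if m*c < k*d then k else 0)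
        = (c-1)*c - ((m*c/d)^2 + (m*c/d)) := by
    intro m hm
    rw [mem_Icc] at hm
    have hg0 : 0 ≤ m*c/d := Int.ediv_nonneg (by nlinarith) hd.le
    have hgc : m*c/d ≤ c - 1 := by
      have : m*c/d < c := (Int.ediv_lt_iff_lt_mul hd).mpr (by nlinarith)
      omega
    have hfil : (Icc (1:ℤ) (c-1)).filter (fun k => m*c < k*d) = Ioc (m*c/d) (c-1) := by
      ext k
      simp only [mem_filter, mem_Icc, mem_Ioc]
      constructor
      · rintro ⟨⟨_, h2⟩, h3⟩
        exact ⟨(Int.ediv_lt_iff_lt_mul hd).mpr (by omega), h2⟩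
      · rintro ⟨h1, h2⟩
        have := (Int.ediv_lt_iff_lt_mul hd).mp h1
        exact ⟨⟨by omega, h2⟩, this⟩
    rw [← Finset.sum_filter, hfil]
    have hdisj : Disjoint (Ioc (0:ℤ) (m*c/d)) (Ioc (m*c/d) (c-1)) := by
      simp [Finset.disjoint_left, mem_Ioc]
      intro a h1 h2 h3
      omega
    have hsplit : (∑ k ∈ Ioc (0:ℤ) (m*c/d), k) + (∑ k ∈ Ioc (m*c/d) (c-1), k)
        = ∑ k ∈ Ioc (0:ℤ) (c-1), k := by
      rw [← Finset.sum_union hdisj, Finset.Ioc_union_Ioc_eq_Ioc hg0 hgc]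
    have h1 := two_sum_id (c-1) (by omega)
    have h2 := two_sum_id (m*c/d) hg0
    linear_combination h1 - h2 + 2 * hsplit
  -- step 4 : combine
  have hsum := Finset.sum_congr rfl key
  rw [← Finset.mul_sum, ← hA, Finset.sum_sub_distrib, Finset.sum_const,
      Finset.sum_add_distrib, nsmul_eq_mul, card_Icc' (d-1) (by omega)] at hsum
  linarith

/-- Per-`c` evaluation of the Dedekind sum in integer terms. -/
lemma int_sum_split (d c : ℤ) (hc : 0 < c) (hcop : IsCoprime d c) :
    ∑ k ∈ Icc (1:ℤ) (c-1), (12*(k*(k*d%c)) - 6*c*k - 6*c*(k*d%c) + 3*c^2)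
      = 2*d*c*(c-1)*(2*c-1) - 12*c*(∑ k ∈ Icc (1:ℤ) (c-1), k * (k*d/c)) - 3*c^2*(c-1) := by
  have hperm := sum_emod_perm d c hc hcop (fun x => x)
  have hkr : ∑ k ∈ Icc (1:ℤ) (c-1), k*(k*d%c)
      = d * (∑ k ∈ Icc (1:ℤ) (c-1), k^2) - c * (∑ k ∈ Icc (1:ℤ) (c-1), k * (k*d/c)) := by
    rw [Finset.mul_sum, Finset.mul_sum, ← Finset.sum_sub_distrib]
    refine Finset.sum_congr rfl fun k hk => ?_
    rw [Int.emod_def]; ring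
  have h6 := six_sum_sq' (c-1) (by omega)
  have h2 := two_sum_id' (c-1) (by omega)
  have hcard := card_Icc' (c-1) (by omega : (0:ℤ) ≤ c - 1)
  have hsplit : ∑ k ∈ Icc (1:ℤ) (c-1), (12*(k*(k*d%c)) - 6*c*k - 6*c*(k*d%c) + 3*c^2)
      = 12*(∑ k ∈ Icc (1:ℤ) (c-1), k*(k*d%c)) - 6*c*(∑ k ∈ Icc (1:ℤ) (c-1), k)
        - 6*c*(∑ k ∈ Icc (1:ℤ) (c-1), k*d%c) + (c-1)*(3*c^2) := by
    rw [Finset.sum_add_distrib, Finset.sum_sub_distrib, Finset.sum_sub_distrib,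
        ← Finset.mul_sum, ← Finset.mul_sum, ← Finset.mul_sum, Finset.sum_const,
        nsmul_eq_mul, hcard]
  rw [hsplit]
  linear_combination 12*hkr + 2*d*h6 - 6*c*hperm - 6*c*h2

lemma L_R (d c : ℤ) (hc : 0 < c) (hcop : IsCoprime d c) :
    12 * (c:ℝ)^2 * dedekindSum d c =
      ((2*d*c*(c-1)*(2*c-1) - 12*c*(∑ k ∈ Icc (1:ℤ) (c-1), k * (k*d/c)) - 3*c^2*(c-1) : ℤ) : ℝ) := by
  have hc' : (0:ℝ) < (c:ℝ) := by exact_mod_cast hc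
  have hterm : ∀ k ∈ Icc (1:ℤ) (c-1),
      12 * (c:ℝ)^2 * (saw ((k:ℝ)/(c:ℝ)) * saw (((k * d : ℤ):ℝ)/(c:ℝ)))
        = ((12*(k*(k*d%c)) - 6*c*k - 6*c*(k*d%c) + 3*c^2 : ℤ) : ℝ) := by
    intro k hk
    rw [mem_Icc] at hk
    have hndk : ¬ c ∣ k := by
      intro h
      have := Int.le_of_dvd (by omega) h
      omega
    have hndkd : ¬ c ∣ k*d := fun h => hndk (hcop.symm.dvd_of_dvd_mul_right h)
    rw [saw_frac hc hndk, saw_frac hc hndkd,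
        Int.emod_eq_of_lt (by omega) (by omega : k < c)]
    push_cast
    field_simp
    ring
  rw [dedekindSum, Finset.mul_sum, Finset.sum_congr rfl hterm, ← Int.cast_sum,
      int_sum_split d c hc hcop]

lemma L_key (d c : ℤ) (hd : 0 < d) (hc : 0 < c) (hcop : IsCoprime d c) :
    12*d^2*(∑ k ∈ Icc (1:ℤ) (c-1), k * (k*d/c)) + 12*c*d*(∑ m ∈ Icc (1:ℤ) (d-1), m * (m*c/d))
      = d*(6*c*d*(c-1)*(d-1) - 3*d*(c-1)*(d-1) + (c^2-1)*(d-1)*(2*d-1)) := by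
  have f1 := count_lemma d c hd hc hcop
  -- squares of the residues mc % d
  have hpermsq := sum_emod_perm c d hd hcop.symm (fun x => x^2)
  have hexp : ∀ m ∈ Icc (1:ℤ) (d-1),
      (m*c % d)^2 = c^2*m^2 - 2*c*d*(m*(m*c/d)) + d^2*(m*c/d)^2 := by
    intro m _
    rw [Int.emod_def]; ring
  rw [Finset.sum_congr rfl hexp, Finset.sum_add_distrib, Finset.sum_sub_distrib,
      ← Finset.mul_sum, ← Finset.mul_sum, ← Finset.mul_sum] at hpermsq
  -- residues mc % d themselves
  have hpermid := sum_emod_perm c d hd hcop.symm (fun x => x)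
  have hexpid : ∀ m ∈ Icc (1:ℤ) (d-1), m*c % d = c*m - d*(m*c/d) := by
    intro m _
    rw [Int.emod_def]; ring
  rw [Finset.sum_congr rfl hexpid, Finset.sum_sub_distrib,
      ← Finset.mul_sum, ← Finset.mul_sum] at hpermid
  have f4 := six_sum_sq' (d-1) (by omega)
  have f5 := two_sum_id' (d-1) (by omega)
  linear_combination 6*d^2*f1 - 6*hpermsq + 6*d*hpermid + (c^2-1)*f4 - 3*d*(c-1)*f5

end DedekindAux2


open Finset DedekindAux DedekindAux2 in
/-- Dedekind's reciprocity law. -/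
theorem dedekindSum_reciprocity (d c : ℤ) (hd : 0 < d) (hc : 0 < c) (hcop : IsCoprime d c) :
    dedekindSum d c + dedekindSum c d =
      (1 / 12) * ((d : ℝ) / c + 1 / (d * c) + (c : ℝ) / d) - 1 / 4 := by
  have hc' : (0:ℝ) < (c:ℝ) := by exact_mod_cast hc
  have hd' : (0:ℝ) < (d:ℝ) := by exact_mod_cast hd
  have h1 := L_R d c hc hcop
  have h2 := L_R c d hd hcop.symm
  have h3 := L_key d c hd hc hcop
  have h3' : ((12*d^2*(∑ k ∈ Icc (1:ℤ) (c-1), k * (k*d/c))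
      + 12*c*d*(∑ m ∈ Icc (1:ℤ) (d-1), m * (m*c/d)) : ℤ) : ℝ)
      = ((d*(6*c*d*(c-1)*(d-1) - 3*d*(c-1)*(d-1) + (c^2-1)*(d-1)*(2*d-1)) : ℤ) : ℝ) := by
    exact_mod_cast congrArg (Int.cast : ℤ → ℝ) h3
  push_cast at h1 h2 h3'
  have key : 12*(c:ℝ)^2*(d:ℝ)^2*(dedekindSum d c + dedekindSum c d)
      = (c:ℝ)*(d:ℝ)^3 + (c:ℝ)*(d:ℝ) + (c:ℝ)^3*(d:ℝ) - 3*(c:ℝ)^2*(d:ℝ)^2 := by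
    linear_combination (d:ℝ)^2*h1 + (c:ℝ)^2*h2 - (c:ℝ)*h3'
  have h12 : (12:ℝ)*(c:ℝ)^2*(d:ℝ)^2 ≠ 0 := by positivity
  have hS : dedekindSum d c + dedekindSum c d
      = ((c:ℝ)*(d:ℝ)^3 + (c:ℝ)*(d:ℝ) + (c:ℝ)^3*(d:ℝ) - 3*(c:ℝ)^2*(d:ℝ)^2) / (12*(c:ℝ)^2*(d:ℝ)^2) := by
    rw [eq_div_iff h12]; linear_combination key
  rw [hS]
  field_simp
  ring
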